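/- Let Y be standard Gaussian in R^p, λ_1 ≥ ... ≥ λ_p ≥ 0, and δ_i = E[λ_i Y_i² / Σ_k λ_k Y_k²]. For indices i < j with λ_j > 0 one has δ_i / δ_j ≤ λ_i / λ_j, i.e. λ_j δ_i ≤ λ_i δ_j. -/

import Mathlib

open MeasureTheory ProbabilityTheory Real

/-- The law of a vector of `p` i.i.d. standard normal random variables. -/
noncomputable def stdGaussianPi (p : ℕ) : Measure (Fin p → ℝ) :=
  Measure.pi fun _ => gaussianReal 0 1

/-- The `i`-th eigenvalue of the spatial sign covariance matrix corresponding to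
shape eigenvalues `lam`. -/
noncomputable def sscmEigen (p : ℕ) (lam : Fin p → ℝ) (i : Fin p) : ℝ :=
  ∫ ω, lam i * (ω i) ^ 2 / (∑ j, lam j * (ω j) ^ 2) ∂(stdGaussianPi p)

theorem sscmEigen_ratio_le (p : ℕ) (lam : Fin p → ℝ)
    (hmono : Antitone lam) (hnonneg : ∀ i, 0 ≤ lam i)
    (i j : Fin p) (hij : i < j) (hj : 0 < lam j) :
    sscmEigen p lam i / sscmEigen p lam j ≤ lam i / lam j ∧
      lam j * sscmEigen p lam i ≤ lam i * sscmEigen p lam j := by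
  classical
  have hi : 0 < lam i := lt_of_lt_of_le hj (hmono hij.le)
  have hijne : i ≠ j := ne_of_lt hij
  set μ := stdGaussianPi p with hμ
  haveI hprob : IsProbabilityMeasure μ := by
    rw [hμ]; unfold stdGaussianPi; infer_instance
  set S : (Fin p → ℝ) → ℝ := fun ω => ∑ k, lam k * ω k ^ 2 with hS
  set S' : (Fin p → ℝ) → ℝ := fun ω => ∑ k, lam k * ω (Equiv.swap i j k) ^ 2 with hS'
  have measS : Measurable S := Finset.measurable_sum _ fun k _ =>
    by fun_prop
  have measS' : Measurable S' := Finset.measurable_sum _ fun k _ =>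
    by fun_prop
  have hSnonneg : ∀ ω, 0 ≤ S ω := fun ω => Finset.sum_nonneg fun k _ =>
    mul_nonneg (hnonneg k) (sq_nonneg _)
  have hS'nonneg : ∀ ω, 0 ≤ S' ω := fun ω => Finset.sum_nonneg fun k _ =>
    mul_nonneg (hnonneg k) (sq_nonneg _)
  have hSle : ∀ (ω : Fin p → ℝ) (k : Fin p), lam k * ω k ^ 2 ≤ S ω := fun ω k =>
    Finset.single_le_sum (fun k _ => mul_nonneg (hnonneg k) (sq_nonneg _)) (Finset.mem_univ k)
  have hS'le : ∀ (ω : Fin p → ℝ) (k : Fin p), lam k * ω (Equiv.swap i j k) ^ 2 ≤ S' ω :=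
    fun ω k =>
    Finset.single_le_sum (f := fun k => lam k * ω (Equiv.swap i j k) ^ 2)
      (fun k _ => mul_nonneg (hnonneg k) (sq_nonneg _)) (Finset.mem_univ k)
  -- integrability helper
  have integ : ∀ (g Sf : (Fin p → ℝ) → ℝ) (c : ℝ), Measurable g → Measurable Sf →
      0 < c → (∀ ω, 0 ≤ g ω) → (∀ ω, 0 ≤ Sf ω) → (∀ ω, c * g ω ≤ Sf ω) →
      Integrable (fun ω => g ω / Sf ω) μ := by
    intro g Sf c hg hSf hc hg0 hSf0 hb
    refine (integrable_const (1 / c)).mono' (hg.div hSf).aestronglyMeasurable ?_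
    refine Filter.Eventually.of_forall fun ω => ?_
    rw [Real.norm_eq_abs, abs_of_nonneg (div_nonneg (hg0 ω) (hSf0 ω))]
    rcases eq_or_lt_of_le (hSf0 ω) with h | h
    · rw [← h, div_zero]; positivity
    · rw [div_le_div_iff₀ h hc, one_mul]
      calc g ω * c = c * g ω := mul_comm _ _
        _ ≤ Sf ω := hb ω
  have intA : Integrable (fun ω => ω i ^ 2 / S ω) μ :=
    integ _ _ (lam i) ((measurable_pi_apply i).pow_const 2) measS hi
      (fun ω => sq_nonneg _) hSnonneg (fun ω => hSle ω i)
  have intB : Integrable (fun ω => ω j ^ 2 / S ω) μ :=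
    integ _ _ (lam j) ((measurable_pi_apply j).pow_const 2) measS hj
      (fun ω => sq_nonneg _) hSnonneg (fun ω => hSle ω j)
  have intA' : Integrable (fun ω => ω j ^ 2 / S' ω) μ := by
    refine integ _ _ (lam i) ((measurable_pi_apply j).pow_const 2) measS' hi
      (fun ω => sq_nonneg _) hS'nonneg (fun ω => ?_)
    have h := hS'le ω i
    rwa [Equiv.swap_apply_left] at h
  have intB' : Integrable (fun ω => ω i ^ 2 / S' ω) μ := by
    refine integ _ _ (lam j) ((measurable_pi_apply i).pow_const 2) measS' hj
      (fun ω => sq_nonneg _) hS'nonneg (fun ω => ?_)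
    have h := hS'le ω j
    rwa [Equiv.swap_apply_right] at h
  -- change of variables via the coordinate swap
  set T := MeasurableEquiv.piCongrLeft (fun _ : Fin p => ℝ) (Equiv.swap i j) with hT
  have hT' : ∀ (x : Fin p → ℝ) (k : Fin p), T x k = x (Equiv.swap i j k) := by
    intro x k
    have h := MeasurableEquiv.piCongrLeft_apply_apply (Equiv.swap i j)
      (β := fun _ => ℝ) x (Equiv.swap i j k)
    rwa [Equiv.swap_apply_self] at h
  have hmp : MeasurePreserving T μ μ := by
    rw [hμ]; unfold stdGaussianPi
    exact measurePreserving_piCongrLeft (fun _ => gaussianReal 0 1) (Equiv.swap i j)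
  have hchg : ∀ g : (Fin p → ℝ) → ℝ, ∫ ω, g (T ω) ∂μ = ∫ ω, g ω ∂μ := fun g =>
    hmp.integral_comp' g
  have hBA : ∫ ω, ω j ^ 2 / S ω ∂μ = ∫ ω, ω i ^ 2 / S' ω ∂μ := by
    rw [← hchg (fun ω => ω j ^ 2 / S ω)]
    refine integral_congr_ae (Filter.Eventually.of_forall fun ω => ?_)
    simp only [hS, hS', hT', Equiv.swap_apply_right]
  have hAB : ∫ ω, ω i ^ 2 / S ω ∂μ = ∫ ω, ω j ^ 2 / S' ω ∂μ := by
    rw [← hchg (fun ω => ω i ^ 2 / S ω)]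
    refine integral_congr_ae (Filter.Eventually.of_forall fun ω => ?_)
    simp only [hS, hS', hT', Equiv.swap_apply_left]
  set A := ∫ ω, ω i ^ 2 / S ω ∂μ with hA
  set B := ∫ ω, ω j ^ 2 / S ω ∂μ with hB
  -- a.e., the j-th coordinate is nonzero
  have h0 : (gaussianReal 0 1) ({0} : Set ℝ) = 0 := by
    rw [gaussianReal_of_var_ne_zero 0 one_ne_zero]
    exact withDensity_absolutelyContinuous _ _ (measure_singleton 0)
  have hae : ∀ᵐ ω ∂μ, ω j ≠ 0 := by
    rw [ae_iff]
    refine measure_mono_null (fun ω hω => ?_)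
      (show μ (Function.eval j ⁻¹' ({0} : Set ℝ)) = 0 by
        rw [hμ]; unfold stdGaussianPi
        exact MeasureTheory.Measure.pi_eval_preimage_null _ h0)
    simp only [Set.mem_setOf_eq, not_not] at hω
    simpa using hω
  -- symmetrization: 2(B - A) equals a nonneg integral
  have i1 : Integrable (fun ω => ω i ^ 2 / S' ω - ω i ^ 2 / S ω) μ := intB'.sub intA
  have i2 : Integrable (fun ω => ω j ^ 2 / S ω - ω j ^ 2 / S' ω) μ := intB.sub intA'
  have h2 : (B - A) + (B - A) =
      ∫ ω, ((ω i ^ 2 / S' ω - ω i ^ 2 / S ω) + (ω j ^ 2 / S ω - ω j ^ 2 / S' ω)) ∂μ := by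
    rw [integral_add i1 i2, integral_sub intB' intA,
      integral_sub intB intA', ← hBA, ← hAB, ← hA, ← hB]
  have hpos : 0 ≤ (B - A) + (B - A) := by
    rw [h2]
    refine integral_nonneg_of_ae ?_
    filter_upwards [hae] with ω hω
    have hspos : 0 < S ω :=
      lt_of_lt_of_le (by positivity) (hSle ω j)
    have hs'pos : 0 < S' ω := by
      refine lt_of_lt_of_le ?_ (hS'le ω i)
      rw [Equiv.swap_apply_left]
      positivity
    have hdiff : S' ω = S ω + (lam i - lam j) * (ω j ^ 2 - ω i ^ 2) := by
      have hz : ∀ k ∈ Finset.univ, k ∉ ({i, j} : Finset (Fin p)) →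
          lam k * ω (Equiv.swap i j k) ^ 2 - lam k * ω k ^ 2 = 0 := by
        intro k _ hk
        simp only [Finset.mem_insert, Finset.mem_singleton, not_or] at hk
        rw [Equiv.swap_apply_of_ne_of_ne hk.1 hk.2, sub_self]
      have hsum : S' ω - S ω =
          ∑ k, (lam k * ω (Equiv.swap i j k) ^ 2 - lam k * ω k ^ 2) := by
        rw [hS', hS, Finset.sum_sub_distrib]
      have hsum2 : ∑ k, (lam k * ω (Equiv.swap i j k) ^ 2 - lam k * ω k ^ 2) =
          ∑ k ∈ ({i, j} : Finset (Fin p)),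
            (lam k * ω (Equiv.swap i j k) ^ 2 - lam k * ω k ^ 2) :=
        (Finset.sum_subset (Finset.subset_univ _) hz).symm
      rw [hsum2, Finset.sum_pair hijne, Equiv.swap_apply_left, Equiv.swap_apply_right] at hsum
      nlinarith [hsum]
    have hlamij : lam j ≤ lam i := hmono hij.le
    have hsne : S ω ≠ 0 := ne_of_gt hspos
    have hs'ne2 : S ω + (lam i - lam j) * (ω j ^ 2 - ω i ^ 2) ≠ 0 := by
      rw [← hdiff]; exact ne_of_gt hs'pos
    have hid : (ω i ^ 2 / S' ω - ω i ^ 2 / S ω) + (ω j ^ 2 / S ω - ω j ^ 2 / S' ω) =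
        (lam i - lam j) * (ω j ^ 2 - ω i ^ 2) ^ 2 / (S ω * S' ω) := by
      rw [hdiff]
      field_simp
      ring
    rw [hid]
    exact div_nonneg (mul_nonneg (sub_nonneg.2 hlamij) (sq_nonneg _))
      (mul_nonneg hspos.le hs'pos.le)
  have key : A ≤ B := by linarith
  have hA0 : 0 ≤ A := by
    rw [hA]
    exact integral_nonneg fun ω => div_nonneg (sq_nonneg _) (hSnonneg ω)
  have hδi : sscmEigen p lam i = lam i * A := by
    rw [sscmEigen, hA, ← hμ]
    simp_rw [mul_div_assoc]
    rw [integral_const_mul]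
  have hδj : sscmEigen p lam j = lam j * B := by
    rw [sscmEigen, hB, ← hμ]
    simp_rw [mul_div_assoc]
    rw [integral_const_mul]
  constructor
  · rw [hδi, hδj]
    rcases eq_or_lt_of_le (le_trans hA0 key) with hB0 | hB0
    · have hA00 : A = 0 := le_antisymm (hB0 ▸ key) hA0
      rw [hA00, ← hB0]
      simp only [mul_zero, zero_div]
      positivity
    · rw [div_le_div_iff₀ (mul_pos hj hB0) hj]
      nlinarith [mul_le_mul_of_nonneg_left key (mul_nonneg hi.le hj.le)]
  · rw [hδi, hδj]
    nlinarith [mul_le_mul_of_nonneg_left key (mul_nonneg hi.le hj.le)]
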